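/- Let (H, *, ≻, Δ) be an infinitesimal Hoch-bialgebra over a field K, and let H₊ := K ⊕ H be its unitalization, with 1 a two-sided unit for both extended operations. Define δ : H₊ → H₊ ⊗ H₊ by δ(1) := 1 ⊗ 1 and δ(x) := 1 ⊗ x + x ⊗ 1 + Δ(x) for x ∈ H, extended linearly. Then δ is coassociative and satisfies the unital infinitesimal relations: writing δ(a) = a₍₁₎ ⊗ a₍₂₎, for all a, b ∈ H₊ one has δ(a ≻ b) = a₍₁₎ ⊗ (a₍₂₎ ≻ b) + (a ≻ b₍₁₎) ⊗ b₍₂₎ − a ⊗ b and δ(a * b) = a₍₁₎ ⊗ (a₍₂₎ * b) + (a * b₍₁₎) ⊗ b₍₂₎ − a ⊗ b. -/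

import Mathlib

open scoped TensorProduct

/-- The extension of a bilinear operation `f` on `M` to the unitalization
`M₊ = K × M`, as a bilinear map, making `1 = (1, 0)` a two-sided unit:
`(λ·1 + a) ∘ (μ·1 + b) = λμ·1 + λb + μa + a ∘ b`. -/
noncomputable def unitalExtL {K M : Type*} [Field K] [AddCommGroup M] [Module K M]
    (f : M →ₗ[K] M →ₗ[K] M) : (K × M) →ₗ[K] (K × M) →ₗ[K] (K × M) :=
  LinearMap.mk₂ K (fun p q => (p.1 * q.1, p.1 • q.2 + q.1 • p.2 + f p.2 q.2))
    (fun p p' q => by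
      refine Prod.ext ?_ ?_ <;>
        simp [add_mul, add_smul, smul_add] <;> abel)
    (fun c p q => by
      refine Prod.ext ?_ ?_ <;>
        simp [mul_assoc, smul_smul, smul_add, smul_comm c] <;> ring_nf)
    (fun p q q' => by
      refine Prod.ext ?_ ?_ <;>
        simp [mul_add, add_smul, smul_add] <;> abel)
    (fun c p q => by
      refine Prod.ext ?_ ?_ <;>
        simp [mul_assoc, smul_smul, smul_comm c, mul_comm] <;> ring_nf)

/-- The unit `1 = (1, 0)` of the unitalization `K × M`. -/
def unitOne (K M : Type*) [Field K] [AddCommGroup M] [Module K M] : K × M := (1, 0)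

/-- The coproduct `δ` on the unitalization `H₊ = K × H`, defined by
`δ(1) = 1 ⊗ 1` and `δ(x) = 1 ⊗ x + x ⊗ 1 + Δ(x)` for `x ∈ H`, extended linearly. -/
noncomputable def unitalDelta {K M : Type*} [Field K] [AddCommGroup M] [Module K M]
    (Δ : M →ₗ[K] M ⊗[K] M) : (K × M) →ₗ[K] (K × M) ⊗[K] (K × M) :=
  LinearMap.coprod
    (LinearMap.toSpanSingleton K ((K × M) ⊗[K] (K × M))
      (unitOne K M ⊗ₜ[K] unitOne K M))
    ((TensorProduct.mk K (K × M) (K × M) (unitOne K M)) ∘ₗ (LinearMap.inr K K M)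
      + ((TensorProduct.mk K (K × M) (K × M)).flip (unitOne K M)) ∘ₗ (LinearMap.inr K K M)
      + (TensorProduct.map (LinearMap.inr K K M) (LinearMap.inr K K M)) ∘ₗ Δ)

set_option synthInstance.maxHeartbeats 400000
set_option maxHeartbeats 1000000

section Aux
variable {K M : Type*} [Field K] [AddCommGroup M] [Module K M]

lemma extL_apply (f : M →ₗ[K] M →ₗ[K] M) (p q : K × M) :
    unitalExtL f p q = (p.1 * q.1, p.1 • q.2 + q.1 • p.2 + f p.2 q.2) := rfl

lemma pair_split (c : K) (x : M) :
    ((c, x) : K × M) = c • unitOne K M + ((0 : K), x) := by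
  simp [unitOne, Prod.ext_iff]

@[simp] lemma ext_one_left (f : M →ₗ[K] M →ₗ[K] M) (p : K × M) :
    unitalExtL f (unitOne K M) p = p := by
  simp [extL_apply, unitOne]

@[simp] lemma ext_one_right (f : M →ₗ[K] M →ₗ[K] M) (p : K × M) :
    unitalExtL f p (unitOne K M) = p := by
  simp [extL_apply, unitOne]

@[simp] lemma ext_inr (f : M →ₗ[K] M →ₗ[K] M) (u v : M) :
    unitalExtL f ((0 : K), u) ((0 : K), v) = ((0 : K), f u v) := by
  simp [extL_apply]

variable (Δ : M →ₗ[K] M ⊗[K] M)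

@[simp] lemma delta_one : unitalDelta Δ (unitOne K M) = unitOne K M ⊗ₜ[K] unitOne K M := by
  simp [unitalDelta, unitOne, LinearMap.toSpanSingleton_apply, Prod.mk_zero_zero]

@[simp] lemma delta_inr (x : M) :
    unitalDelta Δ ((0 : K), x)
      = unitOne K M ⊗ₜ[K] (((0 : K), x) : K × M)
        + (((0 : K), x) : K × M) ⊗ₜ[K] unitOne K M
        + TensorProduct.map (LinearMap.inr K K M) (LinearMap.inr K K M) (Δ x) := by
  simp only [unitalDelta, LinearMap.coprod_apply, LinearMap.add_apply, LinearMap.comp_apply,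
    LinearMap.inr_apply, LinearMap.toSpanSingleton_apply, zero_smul, zero_add,
    TensorProduct.mk_apply, LinearMap.flip_apply]



lemma E1a (f : M →ₗ[K] M →ₗ[K] M) (t : M ⊗[K] M) :
    LinearMap.lTensor (K × M) ((unitalExtL f).flip (unitOne K M))
      (TensorProduct.map (LinearMap.inr K K M) (LinearMap.inr K K M) t)
    = TensorProduct.map (LinearMap.inr K K M) (LinearMap.inr K K M) t := by
  induction t using TensorProduct.induction_on with
  | zero => simp
  | tmul u v => simp
  | add t1 t2 h1 h2 => simp only [map_add, h1, h2]

lemma E1b (f : M →ₗ[K] M →ₗ[K] M) (y : M) (t : M ⊗[K] M) :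
    LinearMap.lTensor (K × M) ((unitalExtL f).flip (((0 : K), y)))
      (TensorProduct.map (LinearMap.inr K K M) (LinearMap.inr K K M) t)
    = TensorProduct.map (LinearMap.inr K K M) (LinearMap.inr K K M)
        (LinearMap.lTensor M (f.flip y) t) := by
  induction t using TensorProduct.induction_on with
  | zero => simp
  | tmul u v => simp
  | add t1 t2 h1 h2 => simp only [map_add, h1, h2]

lemma E2a (f : M →ₗ[K] M →ₗ[K] M) (t : M ⊗[K] M) :
    LinearMap.rTensor (K × M) (unitalExtL f (unitOne K M))
      (TensorProduct.map (LinearMap.inr K K M) (LinearMap.inr K K M) t)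
    = TensorProduct.map (LinearMap.inr K K M) (LinearMap.inr K K M) t := by
  induction t using TensorProduct.induction_on with
  | zero => simp
  | tmul u v => simp
  | add t1 t2 h1 h2 => simp only [map_add, h1, h2]

lemma E2b (f : M →ₗ[K] M →ₗ[K] M) (x : M) (t : M ⊗[K] M) :
    LinearMap.rTensor (K × M) (unitalExtL f (((0 : K), x)))
      (TensorProduct.map (LinearMap.inr K K M) (LinearMap.inr K K M) t)
    = TensorProduct.map (LinearMap.inr K K M) (LinearMap.inr K K M)
        (LinearMap.rTensor M (f x) t) := by
  induction t using TensorProduct.induction_on with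
  | zero => simp
  | tmul u v => simp
  | add t1 t2 h1 h2 => simp only [map_add, h1, h2]

lemma key (f : M →ₗ[K] M →ₗ[K] M)
    (hΔf : ∀ x y : M, Δ (f x y)
        = LinearMap.lTensor M (f.flip y) (Δ x)
          + LinearMap.rTensor M (f x) (Δ y) + x ⊗ₜ[K] y) :
    ∀ a b : K × M, unitalDelta Δ (unitalExtL f a b)
        = LinearMap.lTensor (K × M) ((unitalExtL f).flip b) (unitalDelta Δ a)
          + LinearMap.rTensor (K × M) (unitalExtL f a) (unitalDelta Δ b)
          - a ⊗ₜ[K] b := by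
  intro a b
  obtain ⟨la, x⟩ := a
  obtain ⟨lb, y⟩ := b
  rw [pair_split la x, pair_split lb y]
  simp only [map_add, map_smul, LinearMap.add_apply, LinearMap.smul_apply,
    LinearMap.lTensor_add, LinearMap.lTensor_smul, LinearMap.rTensor_add,
    LinearMap.rTensor_smul, ext_one_left, ext_one_right, ext_inr,
    delta_one, delta_inr, hΔf, E1a, E1b, E2a, E2b,
    LinearMap.lTensor_tmul, LinearMap.rTensor_tmul, LinearMap.flip_apply,
    TensorProduct.map_tmul, LinearMap.inr_apply,
    TensorProduct.tmul_add, TensorProduct.add_tmul, TensorProduct.tmul_smul,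
    TensorProduct.smul_tmul', smul_add]
  simp only [← TensorProduct.smul_tmul', TensorProduct.tmul_smul]
  module


lemma lemC (w : M ⊗[K] M) (v : M) :
    (TensorProduct.assoc K (K × M) (K × M) (K × M))
        ((TensorProduct.map (LinearMap.inr K K M) (LinearMap.inr K K M) w)
          ⊗ₜ[K] (((0 : K), v) : K × M))
      = TensorProduct.map (LinearMap.inr K K M)
          (TensorProduct.map (LinearMap.inr K K M) (LinearMap.inr K K M))
          ((TensorProduct.assoc K M M M) (w ⊗ₜ[K] v)) := by
  induction w using TensorProduct.induction_on with
  | zero => simp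
  | tmul p q => simp
  | add t1 t2 h1 h2 => simp only [map_add, TensorProduct.add_tmul, h1, h2]

lemma lemD (w : M ⊗[K] M) :
    (TensorProduct.assoc K (K × M) (K × M) (K × M))
        ((TensorProduct.map (LinearMap.inr K K M) (LinearMap.inr K K M) w)
          ⊗ₜ[K] unitOne K M)
      = TensorProduct.map (LinearMap.inr K K M)
          (((TensorProduct.mk K (K × M) (K × M)).flip (unitOne K M)) ∘ₗ (LinearMap.inr K K M))
          w := by
  induction w using TensorProduct.induction_on with
  | zero => simp
  | tmul p q => simp
  | add t1 t2 h1 h2 => simp only [map_add, TensorProduct.add_tmul, h1, h2]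

lemma lemA (t : M ⊗[K] M) :
    (TensorProduct.assoc K (K × M) (K × M) (K × M))
        (LinearMap.rTensor (K × M) (unitalDelta Δ)
          (TensorProduct.map (LinearMap.inr K K M) (LinearMap.inr K K M) t))
      = unitOne K M ⊗ₜ[K]
          (TensorProduct.map (LinearMap.inr K K M) (LinearMap.inr K K M) t)
        + TensorProduct.map (LinearMap.inr K K M)
            ((TensorProduct.mk K (K × M) (K × M) (unitOne K M)) ∘ₗ (LinearMap.inr K K M)) t
        + TensorProduct.map (LinearMap.inr K K M)
            (TensorProduct.map (LinearMap.inr K K M) (LinearMap.inr K K M))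
            ((TensorProduct.assoc K M M M) (LinearMap.rTensor M Δ t)) := by
  induction t using TensorProduct.induction_on with
  | zero => simp
  | tmul u v =>
      simp only [TensorProduct.map_tmul, LinearMap.rTensor_tmul, delta_inr,
        TensorProduct.add_tmul, map_add, TensorProduct.assoc_tmul, lemC,
        LinearMap.comp_apply, LinearMap.inr_apply, TensorProduct.mk_apply,
        LinearMap.flip_apply, TensorProduct.tmul_add]
  | add t1 t2 h1 h2 =>
      simp only [map_add, TensorProduct.tmul_add, h1, h2]; abel

lemma lemB (t : M ⊗[K] M) :
    LinearMap.lTensor (K × M) (unitalDelta Δ)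
        (TensorProduct.map (LinearMap.inr K K M) (LinearMap.inr K K M) t)
      = TensorProduct.map (LinearMap.inr K K M)
          ((TensorProduct.mk K (K × M) (K × M) (unitOne K M)) ∘ₗ (LinearMap.inr K K M)) t
        + TensorProduct.map (LinearMap.inr K K M)
            (((TensorProduct.mk K (K × M) (K × M)).flip (unitOne K M)) ∘ₗ (LinearMap.inr K K M)) t
        + TensorProduct.map (LinearMap.inr K K M)
            (TensorProduct.map (LinearMap.inr K K M) (LinearMap.inr K K M))
            (LinearMap.lTensor M Δ t) := by
  induction t using TensorProduct.induction_on with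
  | zero => simp
  | tmul u v =>
      simp only [TensorProduct.map_tmul, LinearMap.lTensor_tmul, delta_inr,
        TensorProduct.tmul_add, LinearMap.comp_apply, LinearMap.inr_apply,
        TensorProduct.mk_apply, LinearMap.flip_apply]
  | add t1 t2 h1 h2 =>
      simp only [map_add, TensorProduct.tmul_add, h1, h2]; abel

lemma keyCoassoc (hcoassoc : ∀ x : M,
      (TensorProduct.assoc K M M M) (LinearMap.rTensor M Δ (Δ x))
        = LinearMap.lTensor M Δ (Δ x)) :
    ∀ a : K × M,
      (TensorProduct.assoc K (K × M) (K × M) (K × M))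
          (LinearMap.rTensor (K × M) (unitalDelta Δ) (unitalDelta Δ a))
        = LinearMap.lTensor (K × M) (unitalDelta Δ) (unitalDelta Δ a) := by
  intro a
  obtain ⟨la, x⟩ := a
  rw [pair_split la x]
  simp only [map_add, map_smul, delta_one, delta_inr, LinearMap.rTensor_tmul,
    LinearMap.lTensor_tmul, TensorProduct.assoc_tmul, TensorProduct.add_tmul,
    TensorProduct.tmul_add, lemA, lemB, lemD, hcoassoc]
  abel

end Aux

/-- Let `(H, m, s, Δ)` be an infinitesimal Hoch-bialgebra and
`H₊ = K × H` its unitalization.  The coproduct `δ` with `δ(1) = 1 ⊗ 1` and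
`δ(x) = 1 ⊗ x + x ⊗ 1 + Δ(x)` for `x ∈ H` is coassociative and satisfies the
unital infinitesimal relations
`δ(a ∘ b) = a₍₁₎ ⊗ (a₍₂₎ ∘ b) + (a ∘ b₍₁₎) ⊗ b₍₂₎ − a ⊗ b` for `∘ ∈ {*, ≻}`. -/
theorem stmt11 (K : Type*) [Field K] (M : Type*) [AddCommGroup M] [Module K M]
    (m s : M →ₗ[K] M →ₗ[K] M)
    (hassoc : ∀ x y z : M, m (m x y) z = m x (m y z))
    (hcocycle : ∀ x y z : M,
      m (s x y) z + s (m x y) z = s x (m y z) + m x (s y z))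
    (Δ : M →ₗ[K] M ⊗[K] M)
    (hcoassoc : ∀ x : M,
      (TensorProduct.assoc K M M M) (LinearMap.rTensor M Δ (Δ x))
        = LinearMap.lTensor M Δ (Δ x))
    (hΔs : ∀ x y : M, Δ (s x y)
        = LinearMap.lTensor M (s.flip y) (Δ x)
          + LinearMap.rTensor M (s x) (Δ y) + x ⊗ₜ[K] y)
    (hΔm : ∀ x y : M, Δ (m x y)
        = LinearMap.lTensor M (m.flip y) (Δ x)
          + LinearMap.rTensor M (m x) (Δ y) + x ⊗ₜ[K] y) :
    (∀ a : K × M,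
      (TensorProduct.assoc K (K × M) (K × M) (K × M))
          (LinearMap.rTensor (K × M) (unitalDelta Δ) (unitalDelta Δ a))
        = LinearMap.lTensor (K × M) (unitalDelta Δ) (unitalDelta Δ a)) ∧
    (∀ a b : K × M, unitalDelta Δ (unitalExtL s a b)
        = LinearMap.lTensor (K × M) ((unitalExtL s).flip b) (unitalDelta Δ a)
          + LinearMap.rTensor (K × M) (unitalExtL s a) (unitalDelta Δ b)
          - a ⊗ₜ[K] b) ∧
    (∀ a b : K × M, unitalDelta Δ (unitalExtL m a b)
        = LinearMap.lTensor (K × M) ((unitalExtL m).flip b) (unitalDelta Δ a)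
          + LinearMap.rTensor (K × M) (unitalExtL m a) (unitalDelta Δ b)
          - a ⊗ₜ[K] b) := by
  exact ⟨keyCoassoc Δ hcoassoc, key Δ s hΔs, key Δ m hΔm⟩
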